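/- Let θ, α be nonconstant inner functions and φ ∈ L^∞(𝕋). Then C_α ∘ D_φ^{θ,α} ∘ C_θ restricted to K_θ^⊥ equals D_{α·conj(φ)·conj(θ)}^{θ,α}, where C_θ f = θ conj(z) conj(f) and C_α g = α conj(z) conj(g). -/

import Mathlib

open MeasureTheory Complex ComplexConjugate

noncomputable section

instance : Fact (0 < 2 * Real.pi) := ⟨by positivity⟩

abbrev 𝕋 : Type := AddCircle (2 * Real.pi)

abbrev m : Measure 𝕋 := AddCircle.haarAddCircle

def e : 𝕋 → ℂ := fun x => fourier 1 x

def Hardy2 : Set (𝕋 → ℂ) :=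
  {f | MemLp f 2 m ∧ ∀ n : ℤ, n < 0 → fourierCoeff f n = 0}

def Hardy2neg : Set (𝕋 → ℂ) :=
  {f | MemLp f 2 m ∧ ∀ n : ℤ, 0 ≤ n → fourierCoeff f n = 0}

def thetaH2 (θ : 𝕋 → ℂ) : Set (𝕋 → ℂ) :=
  {g | ∃ h ∈ Hardy2, g =ᵐ[m] fun x => θ x * h x}

def Kmodel (θ : 𝕋 → ℂ) : Set (𝕋 → ℂ) :=
  {f | f ∈ Hardy2 ∧ ∀ g ∈ thetaH2 θ, ∫ x, f x * conj (g x) ∂m = 0}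

def Kperp (θ : 𝕋 → ℂ) : Set (𝕋 → ℂ) :=
  {f | ∃ g ∈ thetaH2 θ, ∃ h ∈ Hardy2neg, f =ᵐ[m] fun x => g x + h x}

def Cfun (θ f : 𝕋 → ℂ) : 𝕋 → ℂ := fun x => θ x * conj (e x) * conj (f x)

def Jfun (f : 𝕋 → ℂ) : 𝕋 → ℂ := fun x => conj (e x) * conj (f x)

def IsInner (θ : 𝕋 → ℂ) : Prop :=
  MemLp θ ⊤ m ∧ (∀ᵐ x ∂m, ‖θ x‖ = 1) ∧ ∀ n : ℤ, n < 0 → fourierCoeff θ n = 0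

def NCInner (θ : 𝕋 → ℂ) : Prop := IsInner θ ∧ ¬∃ c : ℂ, θ =ᵐ[m] fun _ => c

def IsPneg (f g : 𝕋 → ℂ) : Prop :=
  g ∈ Hardy2neg ∧ ∀ n : ℤ, n < 0 → fourierCoeff g n = fourierCoeff f n

def IsPpos (f g : 𝕋 → ℂ) : Prop :=
  g ∈ Hardy2 ∧ ∀ n : ℤ, 0 ≤ n → fourierCoeff g n = fourierCoeff f n

def IsProjOn (S : Set (𝕋 → ℂ)) (f g : 𝕋 → ℂ) : Prop :=
  g ∈ S ∧ ∀ u ∈ S, ∫ x, (f x - g x) * conj (u x) ∂m = 0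

lemma norm_e (x : 𝕋) : ‖e x‖ = 1 := Circle.norm_coe _

lemma conj_e_mul_e (x : 𝕋) : conj (e x) * e x = 1 := by
  rw [mul_comm, Complex.mul_conj, Complex.normSq_eq_norm_sq, norm_e]
  norm_num

lemma fourierCoeff_Jfun (f : 𝕋 → ℂ) (n : ℤ) :
    fourierCoeff (Jfun f) n = conj (fourierCoeff f (-n - 1)) := by
  rw [fourierCoeff, fourierCoeff, ← integral_conj]
  refine integral_congr_ae (Filter.Eventually.of_forall fun x => ?_)
  have h2 : -(-n - 1) = n + 1 := by ring
  have h3 : fourier (-(n+1)) x = conj (fourier (n+1) x) := fourier_neg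
  have h1 : conj (e x) = fourier (-1 : ℤ) x := by
    rw [fourier_neg]; rfl
  simp only [Jfun, smul_eq_mul, map_mul, h2, ← h3, h1]
  rw [show (-(n+1) : ℤ) = -n + -1 by ring, fourier_add]
  ring

lemma memLp_conj {g : 𝕋 → ℂ} {p : ENNReal} (hg : MemLp g p m) :
    MemLp (fun x => conj (g x)) p m := by
  refine hg.of_le (Complex.continuous_conj.comp_aestronglyMeasurable hg.1)
    (Filter.Eventually.of_forall fun x => ?_)
  simp

lemma memLp_Jfun {f : 𝕋 → ℂ} (hf : MemLp f 2 m) : MemLp (Jfun f) 2 m := by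
  have hm : AEStronglyMeasurable (Jfun f) m := by
    apply AEStronglyMeasurable.mul
    · exact (Complex.continuous_conj.comp (map_continuous (fourier 1))).aestronglyMeasurable
    · exact (memLp_conj hf).1
  refine hf.of_le hm (Filter.Eventually.of_forall fun x => ?_)
  simp only [Jfun, norm_mul, RCLike.norm_conj, norm_e, one_mul, le_refl]

lemma memLp_mul_top {ψ g : 𝕋 → ℂ} (hψ : MemLp ψ ⊤ m) (hg : MemLp g 2 m) :
    MemLp (fun x => ψ x * g x) 2 m := by
  have h := hg.smul (r := 2) hψ
  exact h.ae_eq (Filter.Eventually.of_forall fun x => by simp [smul_eq_mul])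

lemma integrable_mul_L2 {g h : 𝕋 → ℂ} (hg : MemLp g 2 m) (hh : MemLp h 2 m) :
    Integrable (fun x => g x * h x) m := by
  have h1 : (1 : ENNReal) / 1 = 1 / 2 + 1 / 2 := by
    rw [ENNReal.div_add_div_same, one_add_one_eq_two,
      ENNReal.div_self one_ne_zero ENNReal.one_ne_top,
      ENNReal.div_self (by norm_num : (2 : ENNReal) ≠ 0) (by norm_num : (2 : ENNReal) ≠ ⊤)]
  have h2 : MemLp (fun x => g x * h x) 1 m :=
    (hh.smul (r := 1) hg).ae_eq (Filter.Eventually.of_forall fun x => by simp [smul_eq_mul])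
  exact memLp_one_iff_integrable.mp h2

lemma exists_rep_Kperp {α t : 𝕋 → ℂ} (hα : IsInner α) (ht : t ∈ Kperp α) :
    ∃ t', MemLp t' 2 m ∧ t =ᵐ[m] t' := by
  obtain ⟨g, ⟨h', hh', hgh⟩, h, hh, hth⟩ := ht
  refine ⟨fun x => α x * h' x + h x, (memLp_mul_top hα.1 hh'.1).add hh.1, ?_⟩
  refine hth.trans (hgh.mono fun x hx => ?_)
  simp only at hx ⊢
  rw [hx]

lemma Jfun_Hardy2 {h : 𝕋 → ℂ} (hh : h ∈ Hardy2neg) : Jfun h ∈ Hardy2 := by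
  refine ⟨memLp_Jfun hh.1, fun n hn => ?_⟩
  rw [fourierCoeff_Jfun, hh.2 (-n - 1) (by omega), map_zero]

lemma Jfun_Hardy2neg {h : 𝕋 → ℂ} (hh : h ∈ Hardy2) : Jfun h ∈ Hardy2neg := by
  refine ⟨memLp_Jfun hh.1, fun n hn => ?_⟩
  rw [fourierCoeff_Jfun, hh.2 (-n - 1) (by omega), map_zero]

lemma Cfun_mem_Kperp {α t : 𝕋 → ℂ} (hα : IsInner α) (ht : t ∈ Kperp α) :
    Cfun α t ∈ Kperp α := by
  obtain ⟨g, ⟨h', hh', hgh⟩, h, hh, hth⟩ := ht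
  refine ⟨fun x => α x * Jfun h x, ⟨Jfun h, Jfun_Hardy2 hh, Filter.EventuallyEq.rfl⟩,
    Jfun h', Jfun_Hardy2neg hh', ?_⟩
  filter_upwards [hth, hgh, hα.2.1] with x h1 h2 h3
  have hαx : α x * conj (α x) = 1 := by
    rw [Complex.mul_conj, Complex.normSq_eq_norm_sq, h3]
    norm_num
  simp only [Cfun, Jfun, h1, h2, map_add, map_mul]
  linear_combination (conj (e x) * conj (h' x)) * hαx

/-- C_α ∘ D_φ^{θ,α} ∘ C_θ = D_{α conj(φ) conj(θ)}^{θ,α} on K_θ^⊥. -/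
theorem stmt11 (θ α φ : 𝕋 → ℂ) (hθ : NCInner θ) (hα : NCInner α) (hφ : MemLp φ ⊤ m)
    (f : 𝕋 → ℂ) (hf : f ∈ Kperp θ)
    (u v : 𝕋 → ℂ)
    (hu : IsProjOn (Kperp α) (fun x => φ x * Cfun θ f x) u)
    (hv : IsProjOn (Kperp α) (fun x => (α x * conj (φ x) * conj (θ x)) * f x) v) :
    Cfun α u =ᵐ[m] v := by
  obtain ⟨hαI, -⟩ := hα
  obtain ⟨hθI, -⟩ := hθ
  set F : 𝕋 → ℂ := fun x => φ x * Cfun θ f x with hF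
  set w : 𝕋 → ℂ := fun x => (α x * conj (φ x) * conj (θ x)) * f x with hw
  -- w equals Cfun α F pointwise
  have hwF : ∀ x, w x = Cfun α F x := by
    intro x
    simp only [hw, hF, Cfun, map_mul, Complex.conj_conj]
    linear_combination (-(α x * conj (φ x) * conj (θ x) * f x)) * (conj_e_mul_e x)
  have hg₁ : Cfun α u ∈ Kperp α := Cfun_mem_Kperp hαI hu.1
  -- orthogonality of w - Cfun α u against Kperp α
  have horth : ∀ t ∈ Kperp α, ∫ x, (w x - Cfun α u x) * conj (t x) ∂m = 0 := by
    intro t ht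
    have h0 := hu.2 (Cfun α t) (Cfun_mem_Kperp hαI ht)
    have hpt : ∀ x, (w x - Cfun α u x) * conj (t x)
        = conj ((F x - u x) * conj (Cfun α t x)) := by
      intro x
      rw [hwF x]
      simp only [Cfun, map_mul, map_sub, Complex.conj_conj]
      ring
    calc ∫ x, (w x - Cfun α u x) * conj (t x) ∂m
        = ∫ x, conj ((F x - u x) * conj (Cfun α t x)) ∂m :=
          integral_congr_ae (Filter.Eventually.of_forall hpt)
      _ = conj (∫ x, (F x - u x) * conj (Cfun α t x) ∂m) := integral_conj
      _ = 0 := by rw [h0, map_zero]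
  -- L² representatives
  obtain ⟨f', hf', hef⟩ := exists_rep_Kperp hθI hf
  obtain ⟨G₁, hG₁, he₁⟩ := exists_rep_Kperp hαI hg₁
  obtain ⟨G₂, hG₂, he₂⟩ := exists_rep_Kperp hαI hv.1
  set W : 𝕋 → ℂ := fun x => α x * (conj (φ x) * (conj (θ x) * f' x)) with hWdef
  have hW : MemLp W 2 m :=
    memLp_mul_top hαI.1 (memLp_mul_top (memLp_conj hφ) (memLp_mul_top (memLp_conj hθI.1) hf'))
  have hwW : w =ᵐ[m] W := by
    filter_upwards [hef] with x hx
    simp only [hw, hWdef, hx]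
    ring
  -- transfer zero integrals to representatives
  have A : ∀ (gj Gj gk Gk : 𝕋 → ℂ), gj =ᵐ[m] Gj → gk =ᵐ[m] Gk →
      (∫ x, (w x - gj x) * conj (gk x) ∂m = 0) →
      ∫ x, (W x - Gj x) * conj (Gk x) ∂m = 0 := by
    intro gj Gj gk Gk hj hk h0
    rw [← h0]
    apply integral_congr_ae
    filter_upwards [hwW, hj, hk] with x h1 h2 h3
    rw [h1, h2, h3]
  have A11 := A _ G₁ _ G₁ he₁ he₁ (horth _ hg₁)
  have A12 := A _ G₁ _ G₂ he₁ he₂ (horth _ hv.1)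
  have A21 := A _ G₂ _ G₁ he₂ he₁ (hv.2 _ hg₁)
  have A22 := A _ G₂ _ G₂ he₂ he₂ (hv.2 _ hv.1)
  have i11 : Integrable (fun x => (W x - G₁ x) * conj (G₁ x)) m :=
    integrable_mul_L2 (hW.sub hG₁) (memLp_conj hG₁)
  have i12 : Integrable (fun x => (W x - G₁ x) * conj (G₂ x)) m :=
    integrable_mul_L2 (hW.sub hG₁) (memLp_conj hG₂)
  have i21 : Integrable (fun x => (W x - G₂ x) * conj (G₁ x)) m :=
    integrable_mul_L2 (hW.sub hG₂) (memLp_conj hG₁)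
  have i22 : Integrable (fun x => (W x - G₂ x) * conj (G₂ x)) m :=
    integrable_mul_L2 (hW.sub hG₂) (memLp_conj hG₂)
  have expand : ∀ x, (G₁ x - G₂ x) * conj (G₁ x - G₂ x) =
      ((W x - G₂ x) * conj (G₁ x) - (W x - G₁ x) * conj (G₁ x)) -
        ((W x - G₂ x) * conj (G₂ x) - (W x - G₁ x) * conj (G₂ x)) := by
    intro x; simp only [map_sub]; ring
  have key : ∫ x, (G₁ x - G₂ x) * conj (G₁ x - G₂ x) ∂m = 0 := by
    calc ∫ x, (G₁ x - G₂ x) * conj (G₁ x - G₂ x) ∂m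
        = ∫ x, (((W x - G₂ x) * conj (G₁ x) - (W x - G₁ x) * conj (G₁ x)) -
            ((W x - G₂ x) * conj (G₂ x) - (W x - G₁ x) * conj (G₂ x))) ∂m :=
          integral_congr_ae (Filter.Eventually.of_forall expand)
      _ = 0 := by
          have j1 : Integrable (fun x => (W x - G₂ x) * conj (G₁ x)
              - (W x - G₁ x) * conj (G₁ x)) m := i21.sub i11
          have j2 : Integrable (fun x => (W x - G₂ x) * conj (G₂ x)
              - (W x - G₁ x) * conj (G₂ x)) m := i22.sub i12
          rw [integral_sub j1 j2, integral_sub i21 i11, integral_sub i22 i12,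
            A11, A12, A21, A22]
          ring
  have hD : MemLp (fun x => G₁ x - G₂ x) 2 m := hG₁.sub hG₂
  have hint : Integrable (fun x => Complex.normSq (G₁ x - G₂ x)) m := by
    have h := hD.norm.integrable_sq
    refine h.congr (Filter.Eventually.of_forall fun x => ?_)
    simp [Complex.normSq_eq_norm_sq]
  have hint2 : Integrable (fun x => (G₁ x - G₂ x) * conj (G₁ x - G₂ x)) m :=
    integrable_mul_L2 hD (memLp_conj hD)
  have h2 : ∫ x, Complex.re ((G₁ x - G₂ x) * conj (G₁ x - G₂ x)) ∂m
      = Complex.re (∫ x, (G₁ x - G₂ x) * conj (G₁ x - G₂ x) ∂m) := integral_re hint2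
  have hzero : ∫ x, Complex.normSq (G₁ x - G₂ x) ∂m = 0 := by
    have h3 : ∫ x, Complex.normSq (G₁ x - G₂ x) ∂m
        = ∫ x, Complex.re ((G₁ x - G₂ x) * conj (G₁ x - G₂ x)) ∂m :=
      integral_congr_ae (Filter.Eventually.of_forall fun x => by
        show Complex.normSq (G₁ x - G₂ x) = ((G₁ x - G₂ x) * conj (G₁ x - G₂ x)).re
        rw [Complex.mul_conj, Complex.ofReal_re])
    rw [h3, h2, key, Complex.zero_re]
  have hae := (integral_eq_zero_iff_of_nonneg
    (fun x => Complex.normSq_nonneg _) hint).mp hzero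
  have hGG : G₁ =ᵐ[m] G₂ := by
    filter_upwards [hae] with x hx
    exact sub_eq_zero.mp (Complex.normSq_eq_zero.mp hx)
  exact he₁.trans (hGG.trans he₂.symm)
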